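/- arXiv:1011.0826 — 2 statements merged into one kernel-verified Lean document; each statement's English description precedes it below -/
import Mathlib

section
/- Let φ̃ : ℝ² → ℝ be C² and let E = −∇φ̃. Define the vector field A(x₁, x₂, k, α) = (E₂, −E₁, √(2k)(E₁ cos α + E₂ sin α), (E₂ cos α − E₁ sin α)/√(2k)) where E is evaluated at (x₁ − √(2k) sin α, x₂ + √(2k) cos α). Then A is divergence-free on ℝ² × (0, ∞) × ℝ: ∂_{x₁}A₁ + ∂_{x₂}A₂ + ∂_k A₃ + ∂_α A₄ = 0. -/
open Real

theorem stmt9 (φt : ℝ × ℝ → ℝ) (E : ℝ × ℝ → ℝ × ℝ)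
    (hφ : ContDiff ℝ 2 φt)
    (hE : ∀ p : ℝ × ℝ, E p = (-(fderiv ℝ φt p (1, 0)), -(fderiv ℝ φt p (0, 1))))
    (A₁ A₂ A₃ A₄ : ℝ → ℝ → ℝ → ℝ → ℝ)
    (hA₁ : ∀ x₁ x₂ k α, A₁ x₁ x₂ k α =
      (E (x₁ - Real.sqrt (2 * k) * Real.sin α, x₂ + Real.sqrt (2 * k) * Real.cos α)).2)
    (hA₂ : ∀ x₁ x₂ k α, A₂ x₁ x₂ k α =
      -(E (x₁ - Real.sqrt (2 * k) * Real.sin α, x₂ + Real.sqrt (2 * k) * Real.cos α)).1)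
    (hA₃ : ∀ x₁ x₂ k α, A₃ x₁ x₂ k α =
      Real.sqrt (2 * k) *
        ((E (x₁ - Real.sqrt (2 * k) * Real.sin α, x₂ + Real.sqrt (2 * k) * Real.cos α)).1 * Real.cos α +
         (E (x₁ - Real.sqrt (2 * k) * Real.sin α, x₂ + Real.sqrt (2 * k) * Real.cos α)).2 * Real.sin α))
    (hA₄ : ∀ x₁ x₂ k α, A₄ x₁ x₂ k α =
      ((E (x₁ - Real.sqrt (2 * k) * Real.sin α, x₂ + Real.sqrt (2 * k) * Real.cos α)).2 * Real.cos α -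
       (E (x₁ - Real.sqrt (2 * k) * Real.sin α, x₂ + Real.sqrt (2 * k) * Real.cos α)).1 * Real.sin α) /
      Real.sqrt (2 * k)) :
    ∀ (x₁ x₂ k α : ℝ), 0 < k →
      deriv (fun s => A₁ s x₂ k α) x₁ + deriv (fun s => A₂ x₁ s k α) x₂ +
      deriv (fun s => A₃ x₁ x₂ s α) k + deriv (fun s => A₄ x₁ x₂ k s) α = 0 := by
  intro x₁ x₂ k α hk
  have h2k : (0:ℝ) < 2 * k := by linarith
  set r : ℝ := Real.sqrt (2 * k) with hr
  have hr0 : 0 < r := Real.sqrt_pos.2 h2k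
  set D := fderiv ℝ φt with hDdef
  have hD1 : ContDiff ℝ 1 D := hφ.fderiv_right (by norm_num)
  have hDdiff : Differentiable ℝ D := hD1.differentiable one_ne_zero
  set p₀ : ℝ × ℝ := (x₁ - r * Real.sin α, x₂ + r * Real.cos α) with hp₀
  set H := fderiv ℝ D p₀ with hH
  -- key: derivative of s ↦ D (γ s) v
  have key : ∀ (γ : ℝ → ℝ × ℝ) (γ' : ℝ × ℝ) (s : ℝ), γ s = p₀ → HasDerivAt γ γ' s →
      ∀ v : ℝ × ℝ, HasDerivAt (fun t => D (γ t) v) (H γ' v) s := by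
    intro γ γ' s hγs hγ v
    have h1 : HasDerivAt (fun t => D (γ t)) (H γ') s := by
      have hf : HasFDerivAt D H (γ s) := by rw [hγs]; exact (hDdiff p₀).hasFDerivAt
      exact hf.comp_hasDerivAt s hγ
    simpa using h1.clm_apply (hasDerivAt_const s v)
  -- symmetry of second derivative
  have hsym : H (0,1) (1,0) = H (1,0) (0,1) :=
    second_derivative_symmetric
      (fun y => (hφ.differentiable (by norm_num) y).hasFDerivAt)
      (hDdiff p₀).hasFDerivAt _ _
  -- bilinear expansion
  have Hexp : ∀ a b c d : ℝ, H (a, b) (c, d) =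
      a*c * H (1,0) (1,0) + a*d * H (1,0) (0,1) + b*c * H (0,1) (1,0) + b*d * H (0,1) (0,1) := by
    intro a b c d
    have h1 : ((a, b) : ℝ × ℝ) = a • ((1:ℝ), (0:ℝ)) + b • ((0:ℝ), (1:ℝ)) := by
      simp [Prod.ext_iff]
    have h2 : ((c, d) : ℝ × ℝ) = c • ((1:ℝ), (0:ℝ)) + d • ((0:ℝ), (1:ℝ)) := by
      simp [Prod.ext_iff]
    rw [h1, h2]
    simp only [map_add, map_smul, ContinuousLinearMap.add_apply, ContinuousLinearMap.smul_apply,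
      smul_eq_mul]
    ring
  -- derivative of sqrt(2s) at k
  have hrne : r ≠ 0 := ne_of_gt hr0
  have hsq : HasDerivAt (fun s : ℝ => Real.sqrt (2 * s)) (1 / r) k := by
    have h1 : HasDerivAt (fun s : ℝ => 2 * s) 2 k := by
      simpa using (hasDerivAt_id k).const_mul 2
    have h2 := (Real.hasDerivAt_sqrt (ne_of_gt h2k)).comp k h1
    refine h2.congr_deriv ?_
    rw [← hr]; field_simp
  -- term 1
  have hγ₁ : HasDerivAt (fun s : ℝ => (s - r * Real.sin α, x₂ + r * Real.cos α))
      ((1:ℝ), (0:ℝ)) x₁ :=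
    (((hasDerivAt_id x₁).sub_const _)).prodMk (hasDerivAt_const _ _)
  have hd1 : HasDerivAt (fun s => A₁ s x₂ k α) (-(H (1,0) (0,1))) x₁ := by
    have := (key _ _ x₁ rfl hγ₁ (0,1)).neg
    convert this using 1 <;> try rfl
    funext s
    rw [hA₁, hE, ← hr]
    rfl
  -- term 2
  have hγ₂ : HasDerivAt (fun s : ℝ => (x₁ - r * Real.sin α, s + r * Real.cos α))
      ((0:ℝ), (1:ℝ)) x₂ :=
    (hasDerivAt_const _ _).prodMk ((hasDerivAt_id x₂).add_const _)
  have hd2 : HasDerivAt (fun s => A₂ x₁ s k α) (H (0,1) (1,0)) x₂ := by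
    have := key _ _ x₂ rfl hγ₂ (1,0)
    convert this using 1 <;> try rfl
    funext s
    rw [hA₂, hE, ← hr]
    simp
  -- term 3
  have hγ₃ : HasDerivAt (fun s : ℝ =>
      (x₁ - Real.sqrt (2 * s) * Real.sin α, x₂ + Real.sqrt (2 * s) * Real.cos α))
      (-((1/r) * Real.sin α), (1/r) * Real.cos α) k :=
    ((hsq.mul_const _).const_sub _).prodMk ((hsq.mul_const _).const_add _)
  have hγ₃k : (x₁ - Real.sqrt (2 * k) * Real.sin α, x₂ + Real.sqrt (2 * k) * Real.cos α) = p₀ := by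
    rw [← hr]
  have hd3 : HasDerivAt (fun s => A₃ x₁ x₂ s α)
      ((1/r) * ((-(D p₀ (1,0))) * Real.cos α + (-(D p₀ (0,1))) * Real.sin α) +
        r * ((-(H (-((1/r) * Real.sin α), (1/r) * Real.cos α) (1,0))) * Real.cos α +
             (-(H (-((1/r) * Real.sin α), (1/r) * Real.cos α) (0,1))) * Real.sin α)) k := by
    have hin : HasDerivAt (fun s =>
        (-(D (x₁ - Real.sqrt (2 * s) * Real.sin α, x₂ + Real.sqrt (2 * s) * Real.cos α) (1,0)))
          * Real.cos α +
        (-(D (x₁ - Real.sqrt (2 * s) * Real.sin α, x₂ + Real.sqrt (2 * s) * Real.cos α) (0,1)))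
          * Real.sin α)
        ((-(H (-((1/r) * Real.sin α), (1/r) * Real.cos α) (1,0))) * Real.cos α +
         (-(H (-((1/r) * Real.sin α), (1/r) * Real.cos α) (0,1))) * Real.sin α) k :=
      (((key _ _ k hγ₃k hγ₃ (1,0)).neg.mul_const _)).add
        (((key _ _ k hγ₃k hγ₃ (0,1)).neg.mul_const _))
    have := hsq.mul hin
    convert this using 1 <;> try rfl
    · funext s
      rw [hA₃, hE]
      rfl
  -- term 4
  have hγ₄ : HasDerivAt (fun s : ℝ => (x₁ - r * Real.sin s, x₂ + r * Real.cos s))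
      (-(r * Real.cos α), r * (-Real.sin α)) α :=
    (((Real.hasDerivAt_sin α).const_mul r).const_sub _).prodMk
      (((Real.hasDerivAt_cos α).const_mul r).const_add _)
  have hd4 : HasDerivAt (fun s => A₄ x₁ x₂ k s)
      ((((-(H (-(r * Real.cos α), r * (-Real.sin α)) (0,1))) * Real.cos α +
          (-(D p₀ (0,1))) * (-Real.sin α)) -
        ((-(H (-(r * Real.cos α), r * (-Real.sin α)) (1,0))) * Real.sin α +
          (-(D p₀ (1,0))) * Real.cos α)) / r) α := by
    have h2 : HasDerivAt (fun s =>
        ((-(D (x₁ - r * Real.sin s, x₂ + r * Real.cos s) (0,1))) * Real.cos s -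
         (-(D (x₁ - r * Real.sin s, x₂ + r * Real.cos s) (1,0))) * Real.sin s) / r)
        ((((-(H (-(r * Real.cos α), r * (-Real.sin α)) (0,1))) * Real.cos α +
            (-(D p₀ (0,1))) * (-Real.sin α)) -
          ((-(H (-(r * Real.cos α), r * (-Real.sin α)) (1,0))) * Real.sin α +
            (-(D p₀ (1,0))) * Real.cos α)) / r) α := by
      exact (((key _ _ α rfl hγ₄ (0,1)).neg.mul (Real.hasDerivAt_cos α)).sub
        ((key _ _ α rfl hγ₄ (1,0)).neg.mul (Real.hasDerivAt_sin α))).div_const r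
    convert h2 using 1 <;> try rfl
    funext s
    rw [hA₄, hE, ← hr]
  rw [hd1.deriv, hd2.deriv, hd3.deriv, hd4.deriv]
  set h11 := H (1,0) (1,0) with e11
  set h12 := H (1,0) (0,1) with e12
  set h21 := H (0,1) (1,0) with e21
  set h22 := H (0,1) (0,1) with e22
  simp only [Hexp]
  rw [hsym]
  field_simp
  ring
end

section
/- Suppose (X̃, Ṽ) solve the characteristic system X̃' = (1/ε)Ṽ, Ṽ' = Ẽ(X̃, t) + (1/ε)(Ṽ₂, −Ṽ₁) with Ẽ = −∇φ̃ for a C¹ potential φ̃(·, t). Define the canonical gyrokinetic characteristics X₁ = X̃₁ + Ṽ₂, X₂ = X̃₂ − Ṽ₁, K = |Ṽ|²/2, and A by Ṽ = √(2K)(cos A, sin A) (assuming Ṽ never vanishes and A is a smooth lift). Then with H_ε(x₁,x₂,k,α,t) = k/ε + φ̃(x₁ − √(2k) sin α, x₂ + √(2k) cos α, t), the curves satisfy Hamilton's equations X₁' = −∂_{x₂}H_ε, X₂' = ∂_{x₁}H_ε, K' = ∂_α H_ε, A' = −∂_k H_ε, all evaluated at (X₁, X₂, K, A, t). -/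
lemma comp_aux' {φ : ℝ × ℝ → ℝ} {L : ℝ × ℝ →L[ℝ] ℝ} {p : ℝ × ℝ} (hφ : HasFDerivAt φ L p)
    {f g : ℝ → ℝ} {f' g' x : ℝ} (hf : HasDerivAt f f' x) (hg : HasDerivAt g g' x)
    (hx : (f x, g x) = p) :
    HasDerivAt (fun y => φ (f y, g y)) (L (f', g')) x := by
  have h2 : HasFDerivAt φ L (f x, g x) := hx.symm ▸ hφ
  exact h2.comp_hasDerivAt x (hf.prodMk hg)

theorem stmt11 (ε : ℝ) (hε : 0 < ε)
    (φt : ℝ × ℝ → ℝ → ℝ) (hφ : ∀ t, ContDiff ℝ 1 (fun p => φt p t))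
    (E₁ E₂ : ℝ × ℝ → ℝ → ℝ)
    (hE₁ : ∀ p t, E₁ p t = -(fderiv ℝ (fun q => φt q t) p (1, 0)))
    (hE₂ : ∀ p t, E₂ p t = -(fderiv ℝ (fun q => φt q t) p (0, 1)))
    -- the Hamiltonian H_ε
    (H : ℝ → ℝ → ℝ → ℝ → ℝ → ℝ)
    (hH : ∀ x₁ x₂ k α t, H x₁ x₂ k α t = k / ε +
      φt (x₁ - Real.sqrt (2 * k) * Real.sin α, x₂ + Real.sqrt (2 * k) * Real.cos α) t)
    -- the characteristics of the scaled Vlasov equation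
    (X₁ X₂ V₁ V₂ : ℝ → ℝ)
    (hX₁ : ∀ t, HasDerivAt X₁ ((1 / ε) * V₁ t) t)
    (hX₂ : ∀ t, HasDerivAt X₂ ((1 / ε) * V₂ t) t)
    (hV₁ : ∀ t, HasDerivAt V₁ (E₁ (X₁ t, X₂ t) t + (1 / ε) * V₂ t) t)
    (hV₂ : ∀ t, HasDerivAt V₂ (E₂ (X₁ t, X₂ t) t - (1 / ε) * V₁ t) t)
    (hVne : ∀ t, V₁ t ^ 2 + V₂ t ^ 2 > 0)
    -- the canonical gyrokinetic characteristics
    (K : ℝ → ℝ) (hK : ∀ t, K t = (V₁ t ^ 2 + V₂ t ^ 2) / 2)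
    (A : ℝ → ℝ) (hAcont : Continuous A)
    (hA₁ : ∀ t, V₁ t = Real.sqrt (2 * K t) * Real.cos (A t))
    (hA₂ : ∀ t, V₂ t = Real.sqrt (2 * K t) * Real.sin (A t)) :
    (∀ t, HasDerivAt (fun s => X₁ s + V₂ s)
      (-(deriv (fun y => H (X₁ t + V₂ t) y (K t) (A t) t) (X₂ t - V₁ t))) t) ∧
    (∀ t, HasDerivAt (fun s => X₂ s - V₁ s)
      (deriv (fun y => H y (X₂ t - V₁ t) (K t) (A t) t) (X₁ t + V₂ t)) t) ∧
    (∀ t, HasDerivAt K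
      (deriv (fun β => H (X₁ t + V₂ t) (X₂ t - V₁ t) (K t) β t) (A t)) t) ∧
    (∀ t, HasDerivAt A
      (-(deriv (fun κ => H (X₁ t + V₂ t) (X₂ t - V₁ t) κ (A t) t) (K t))) t) := by
  have hφd : ∀ (t : ℝ) (p : ℝ × ℝ), HasFDerivAt (fun q => φt q t) (fderiv ℝ (fun q => φt q t) p) p :=
    fun t p => (((hφ t).differentiable one_ne_zero) p).hasFDerivAt
  have hKpos : ∀ t, 0 < K t := fun t => by rw [hK t]; exact div_pos (hVne t) two_pos
  have h2K : ∀ t, (0:ℝ) < 2 * K t := fun t => by linarith [hKpos t]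
  have hrpos : ∀ t, 0 < Real.sqrt (2 * K t) := fun t => Real.sqrt_pos.2 (h2K t)
  have hpt₁ : ∀ t, X₁ t + V₂ t - Real.sqrt (2 * K t) * Real.sin (A t) = X₁ t := fun t => by
    rw [← hA₂ t]; ring
  have hpt₂ : ∀ t, X₂ t - V₁ t + Real.sqrt (2 * K t) * Real.cos (A t) = X₂ t := fun t => by
    rw [← hA₁ t]; ring
  have hlin : ∀ (L : ℝ × ℝ →L[ℝ] ℝ) (a b : ℝ), L (a, b) = a * L (1, 0) + b * L (0, 1) := by
    intro L a b
    have h : (a, b) = a • ((1:ℝ), (0:ℝ)) + b • ((0:ℝ), (1:ℝ)) := by simp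
    rw [h, map_add, map_smul, map_smul, smul_eq_mul, smul_eq_mul]
  have hKd : ∀ u, HasDerivAt K (V₁ u * E₁ (X₁ u, X₂ u) u + V₂ u * E₂ (X₁ u, X₂ u) u) u := by
    intro u
    have hKfun : K = fun s => (V₁ s ^ 2 + V₂ s ^ 2) / 2 := funext hK
    rw [hKfun]
    have h := (((hV₁ u).pow 2).add ((hV₂ u).pow 2)).div_const 2
    convert h using 1 <;> try rfl
    push_cast
    ring
  refine ⟨?_, ?_, ?_, ?_⟩
  · -- part 1
    intro t
    have hfun : (fun y => H (X₁ t + V₂ t) y (K t) (A t) t)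
        = fun y => K t / ε + φt (X₁ t + V₂ t - Real.sqrt (2 * K t) * Real.sin (A t),
            y + Real.sqrt (2 * K t) * Real.cos (A t)) t := funext fun y => hH _ _ _ _ _
    have hc := comp_aux' (hφd t (X₁ t, X₂ t))
      (hasDerivAt_const (X₂ t - V₁ t) (X₁ t + V₂ t - Real.sqrt (2 * K t) * Real.sin (A t)))
      ((hasDerivAt_id (X₂ t - V₁ t)).add_const (Real.sqrt (2 * K t) * Real.cos (A t)))
      (by rw [Prod.mk.injEq]; exact ⟨hpt₁ t, hpt₂ t⟩)
    have key : HasDerivAt (fun y => H (X₁ t + V₂ t) y (K t) (A t) t)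
        (fderiv ℝ (fun q => φt q t) (X₁ t, X₂ t) (1, 0) * 0
          + fderiv ℝ (fun q => φt q t) (X₁ t, X₂ t) (0, 1)) (X₂ t - V₁ t) := by
      rw [hfun]
      have := (hasDerivAt_const (X₂ t - V₁ t) (K t / ε)).add hc
      convert this using 1 <;> try rfl
      rw [hlin]
      ring
    rw [key.deriv]
    have h := (hX₁ t).add (hV₂ t)
    convert h using 1 <;> try rfl
    rw [hE₂]
    ring
  · -- part 2
    intro t
    have hfun : (fun y => H y (X₂ t - V₁ t) (K t) (A t) t)
        = fun y => K t / ε + φt (y - Real.sqrt (2 * K t) * Real.sin (A t),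
            X₂ t - V₁ t + Real.sqrt (2 * K t) * Real.cos (A t)) t := funext fun y => hH _ _ _ _ _
    have hc := comp_aux' (hφd t (X₁ t, X₂ t))
      ((hasDerivAt_id (X₁ t + V₂ t)).sub_const (Real.sqrt (2 * K t) * Real.sin (A t)))
      (hasDerivAt_const (X₁ t + V₂ t) (X₂ t - V₁ t + Real.sqrt (2 * K t) * Real.cos (A t)))
      (by rw [Prod.mk.injEq]; exact ⟨hpt₁ t, hpt₂ t⟩)
    have key : HasDerivAt (fun y => H y (X₂ t - V₁ t) (K t) (A t) t)
        (fderiv ℝ (fun q => φt q t) (X₁ t, X₂ t) (1, 0)) (X₁ t + V₂ t) := by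
      rw [hfun]
      have := (hasDerivAt_const (X₁ t + V₂ t) (K t / ε)).add hc
      convert this using 1 <;> try rfl
      rw [hlin]
      ring
    rw [key.deriv]
    have h := (hX₂ t).sub (hV₁ t)
    convert h using 1 <;> try rfl
    rw [hE₁]
    ring
  · -- part 3
    intro t
    have hfun : (fun β => H (X₁ t + V₂ t) (X₂ t - V₁ t) (K t) β t)
        = fun β => K t / ε + φt (X₁ t + V₂ t - Real.sqrt (2 * K t) * Real.sin β,
            X₂ t - V₁ t + Real.sqrt (2 * K t) * Real.cos β) t := funext fun β => hH _ _ _ _ _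
    have hf : HasDerivAt (fun β => X₁ t + V₂ t - Real.sqrt (2 * K t) * Real.sin β)
        (-(V₁ t)) (A t) := by
      have h := ((Real.hasDerivAt_sin (A t)).const_mul (Real.sqrt (2 * K t))).const_sub
        (X₁ t + V₂ t)
      rw [hA₁ t]
      exact h
    have hg : HasDerivAt (fun β => X₂ t - V₁ t + Real.sqrt (2 * K t) * Real.cos β)
        (-(V₂ t)) (A t) := by
      have h := ((Real.hasDerivAt_cos (A t)).const_mul (Real.sqrt (2 * K t))).const_add
        (X₂ t - V₁ t)
      rw [hA₂ t]
      convert h using 1 <;> try rfl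
      ring
    have hc := comp_aux' (hφd t (X₁ t, X₂ t)) hf hg
      (by rw [Prod.mk.injEq]; exact ⟨hpt₁ t, hpt₂ t⟩)
    have key : HasDerivAt (fun β => H (X₁ t + V₂ t) (X₂ t - V₁ t) (K t) β t)
        (fderiv ℝ (fun q => φt q t) (X₁ t, X₂ t) (-(V₁ t), -(V₂ t))) (A t) := by
      rw [hfun]
      simpa [Pi.add_def] using (hasDerivAt_const (A t) (K t / ε)).add hc
    rw [key.deriv]
    have h := hKd t
    convert h using 1 <;> try rfl
    rw [hlin, hE₁, hE₂]
    ring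
  · -- part 4
    intro t
    have hS0 : Real.sqrt (2 * K t) ≠ 0 := (hrpos t).ne'
    have hS2 : Real.sqrt (2 * K t) * Real.sqrt (2 * K t) = V₁ t ^ 2 + V₂ t ^ 2 := by
      rw [Real.mul_self_sqrt (h2K t).le, hK t]; ring
    -- derivative of κ ↦ √(2κ) at K t
    have hsd : HasDerivAt (fun κ : ℝ => Real.sqrt (2 * κ)) (1 / Real.sqrt (2 * K t)) (K t) := by
      have h2 : HasDerivAt (fun κ : ℝ => 2 * κ) 2 (K t) := by
        simpa using (hasDerivAt_id (K t)).const_mul 2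
      have h3 := (Real.hasDerivAt_sqrt (h2K t).ne').comp (K t) h2
      convert h3 using 1 <;> try rfl
      ring
    have hfun : (fun κ => H (X₁ t + V₂ t) (X₂ t - V₁ t) κ (A t) t)
        = fun κ => κ / ε + φt (X₁ t + V₂ t - Real.sqrt (2 * κ) * Real.sin (A t),
            X₂ t - V₁ t + Real.sqrt (2 * κ) * Real.cos (A t)) t := funext fun κ => hH _ _ _ _ _
    have hc := comp_aux' (hφd t (X₁ t, X₂ t))
      ((hsd.mul_const (Real.sin (A t))).const_sub (X₁ t + V₂ t))
      ((hsd.mul_const (Real.cos (A t))).const_add (X₂ t - V₁ t))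
      (by rw [Prod.mk.injEq]; exact ⟨hpt₁ t, hpt₂ t⟩)
    have key : HasDerivAt (fun κ => H (X₁ t + V₂ t) (X₂ t - V₁ t) κ (A t) t)
        (1 / ε + fderiv ℝ (fun q => φt q t) (X₁ t, X₂ t)
          (-(1 / Real.sqrt (2 * K t) * Real.sin (A t)), 1 / Real.sqrt (2 * K t) * Real.cos (A t)))
        (K t) := by
      rw [hfun]
      exact ((hasDerivAt_id (K t)).div_const ε).add hc
    rw [key.deriv]
    -- now build the derivative of A
    have hr : HasDerivAt (fun s => Real.sqrt (2 * K s))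
        (1 / (2 * Real.sqrt (2 * K t)) *
          (2 * (V₁ t * E₁ (X₁ t, X₂ t) t + V₂ t * E₂ (X₁ t, X₂ t) t))) t := by
      have h2 := (hKd t).const_mul 2
      exact (Real.hasDerivAt_sqrt (h2K t).ne').comp t h2
    have hgd : HasDerivAt (fun s => V₂ s * V₁ t - V₁ s * V₂ t)
        ((E₂ (X₁ t, X₂ t) t - 1 / ε * V₁ t) * V₁ t - (E₁ (X₁ t, X₂ t) t + 1 / ε * V₂ t) * V₂ t)
        t := ((hV₂ t).mul_const (V₁ t)).sub ((hV₁ t).mul_const (V₂ t))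
    have hden : HasDerivAt (fun s => Real.sqrt (2 * K s) * Real.sqrt (2 * K t))
        (1 / (2 * Real.sqrt (2 * K t)) *
          (2 * (V₁ t * E₁ (X₁ t, X₂ t) t + V₂ t * E₂ (X₁ t, X₂ t) t)) * Real.sqrt (2 * K t))
        t := hr.mul_const _
    have hdne : Real.sqrt (2 * K t) * Real.sqrt (2 * K t) ≠ 0 :=
      (mul_pos (hrpos t) (hrpos t)).ne'
    have hf := hgd.div hden hdne
    have hft : (V₂ t * V₁ t - V₁ t * V₂ t) /
        (Real.sqrt (2 * K t) * Real.sqrt (2 * K t)) = 0 := by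
      rw [show V₂ t * V₁ t - V₁ t * V₂ t = 0 by ring, zero_div]
    have harc := (Real.hasDerivAt_arcsin
      (x := (V₂ t * V₁ t - V₁ t * V₂ t) / (Real.sqrt (2 * K t) * Real.sqrt (2 * K t)))
      (by rw [hft]; norm_num) (by rw [hft]; norm_num)).comp t hf
    have hA' := harc.const_add (A t)
    -- A agrees with this function near t
    have hsin : ∀ s, Real.sin (A s - A t) = (V₂ s * V₁ t - V₁ s * V₂ t) /
        (Real.sqrt (2 * K s) * Real.sqrt (2 * K t)) := by
      intro s
      rw [Real.sin_sub, eq_div_iff (mul_ne_zero (hrpos s).ne' (hrpos t).ne'),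
        hA₁ s, hA₁ t, hA₂ s, hA₂ t]
      ring
    have hcont : ∀ᶠ s in nhds t, |A s - A t| < Real.pi / 2 := by
      have hc2 : ContinuousAt (fun s => |A s - A t|) t :=
        ((hAcont.sub continuous_const).abs).continuousAt
      have h0 : |A t - A t| < Real.pi / 2 := by
        simp [Real.pi_pos]
      exact hc2.eventually_lt continuousAt_const h0
    have hev : A =ᶠ[nhds t] (fun s => A t + Real.arcsin ((V₂ s * V₁ t - V₁ s * V₂ t) /
        (Real.sqrt (2 * K s) * Real.sqrt (2 * K t)))) := by
      filter_upwards [hcont] with s hs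
      have hb := abs_lt.1 hs
      rw [← hsin s, Real.arcsin_sin (by linarith [hb.1]) (by linarith [hb.2])]
      ring
    have hAd := hA'.congr_of_eventuallyEq hev
    convert hAd using 1 <;> try rfl
    rw [hft]
    rw [hlin, show fderiv ℝ (fun q => φt q t) (X₁ t, X₂ t) (1, 0) = -(E₁ (X₁ t, X₂ t) t) by
        rw [hE₁, neg_neg], show fderiv ℝ (fun q => φt q t) (X₁ t, X₂ t) (0, 1) = -(E₂ (X₁ t, X₂ t) t) by
        rw [hE₂, neg_neg]]
    have hsin' : Real.sin (A t) = V₂ t / Real.sqrt (2 * K t) := by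
      rw [hA₂ t, mul_comm, mul_div_assoc, div_self hS0, mul_one]
    have hcos' : Real.cos (A t) = V₁ t / Real.sqrt (2 * K t) := by
      rw [hA₁ t, mul_comm, mul_div_assoc, div_self hS0, mul_one]
    rw [hsin', hcos', show V₂ t * V₁ t - V₁ t * V₂ t = 0 from by ring]
    set S := Real.sqrt (2 * K t) with hSdef
    set a := V₁ t with hadef
    set b := V₂ t with hbdef
    set e₁ := E₁ (X₁ t, X₂ t) t with he₁def
    set e₂ := E₂ (X₁ t, X₂ t) t with he₂def
    rw [show (1:ℝ) - 0 ^ 2 = 1 by norm_num, Real.sqrt_one]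
    have hSne : S ≠ 0 := hS0
    field_simp
    linear_combination (-S ^ 2) * hS2
end
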